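/- For a C² curve x : ℝ → ℝ² satisfying m·ẍ = L·K·J·ẋ with unit speed initial data, the (signed) curvature of the trajectory at each time equals (L·K)/(m·v), where v = |ẋ| is the constant speed; i.e., ⟨ẍ(t), J·ẋ(t)⟩/|ẋ(t)|³ = L·K/(m·v) for all t with ẋ(t) ≠ 0. -/

import Mathlib

noncomputable section

/-- Rotation by π/2. -/
def J2 (v : ℝ × ℝ) : ℝ × ℝ := (-v.2, v.1)

/-- Euclidean inner product on ℝ². -/
def dot2 (v w : ℝ × ℝ) : ℝ := v.1 * w.1 + v.2 * w.2

/-- Euclidean norm on ℝ². -/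
def enorm2 (v : ℝ × ℝ) : ℝ := Real.sqrt (v.1 ^ 2 + v.2 ^ 2)

/-- For a C² solution of `m ẍ = L K J ẋ`, the signed curvature of the trajectory
equals `L K / (m v)` where `v = |ẋ(0)|` is the (constant) speed. -/
theorem signed_curvature (x : ℝ → ℝ × ℝ) (hx : ContDiff ℝ 2 x)
    (m L K : ℝ) (hm : 0 < m)
    (heq : ∀ t, m • deriv (deriv x) t = (L * K) • J2 (deriv x t))
    (v : ℝ) (hv : v = enorm2 (deriv x 0)) (hvpos : 0 < v) :
    ∀ t, deriv x t ≠ 0 →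
      dot2 (deriv (deriv x) t) (J2 (deriv x t)) / (enorm2 (deriv x t)) ^ 3
        = L * K / (m * v) := by
  -- differentiability of the velocity
  have hdiff : Differentiable ℝ (deriv x) := by
    have h := (contDiff_succ_iff_deriv.mp (show ContDiff ℝ ((1:ℕ∞)+1) x from hx)).2
    exact h.2.differentiable (by simp)
  -- component equations
  have hcomp : ∀ t, (deriv (deriv x) t).1 = (L * K / m) * (-(deriv x t).2) ∧
      (deriv (deriv x) t).2 = (L * K / m) * (deriv x t).1 := by
    intro t
    have h := heq t
    have h1 : m * (deriv (deriv x) t).1 = (L * K) * (-(deriv x t).2) := by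
      have := congrArg Prod.fst h
      simpa [J2, Prod.smul_def] using this
    have h2 : m * (deriv (deriv x) t).2 = (L * K) * (deriv x t).1 := by
      have := congrArg Prod.snd h
      simpa [J2, Prod.smul_def] using this
    constructor <;> field_simp <;> linarith
  -- the speed squared function
  set g : ℝ → ℝ := fun t => (deriv x t).1 ^ 2 + (deriv x t).2 ^ 2 with hg
  have hgd : ∀ t, HasDerivAt g 0 t := by
    intro t
    have hu : HasDerivAt (deriv x) (deriv (deriv x) t) t :=
      (hdiff t).hasDerivAt
    have h1 : HasDerivAt (fun s => (deriv x s).1) (deriv (deriv x) t).1 t := by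
      have := (ContinuousLinearMap.fst ℝ ℝ ℝ).hasFDerivAt.comp t hu.hasFDerivAt
      simpa [hasDerivAt_iff_hasFDerivAt, Function.comp_def] using this.hasDerivAt
    have h2 : HasDerivAt (fun s => (deriv x s).2) (deriv (deriv x) t).2 t := by
      have := (ContinuousLinearMap.snd ℝ ℝ ℝ).hasFDerivAt.comp t hu.hasFDerivAt
      simpa [hasDerivAt_iff_hasFDerivAt, Function.comp_def] using this.hasDerivAt
    have h3 : HasDerivAt g
        (2 * (deriv x t).1 * (deriv (deriv x) t).1 +
          2 * (deriv x t).2 * (deriv (deriv x) t).2) t := by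
      have := ((h1.pow 2).add (h2.pow 2))
      exact this.congr_deriv (by push_cast; ring)
    have hz : 2 * (deriv x t).1 * (deriv (deriv x) t).1 +
        2 * (deriv x t).2 * (deriv (deriv x) t).2 = 0 := by
      obtain ⟨e1, e2⟩ := hcomp t
      rw [e1, e2]; ring
    rwa [hz] at h3
  have hgconst : ∀ t, g t = g 0 := by
    intro t
    have hgdiff : Differentiable ℝ g := fun t => (hgd t).differentiableAt
    have : ∀ s, deriv g s = 0 := fun s => (hgd s).deriv
    exact is_const_of_deriv_eq_zero hgdiff this t 0
  -- constant speed
  have hspeed : ∀ t, enorm2 (deriv x t) = v := by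
    intro t
    rw [hv]
    unfold enorm2
    rw [show (deriv x t).1 ^ 2 + (deriv x t).2 ^ 2 = g t from rfl,
      show (deriv x 0).1 ^ 2 + (deriv x 0).2 ^ 2 = g 0 from rfl, hgconst t]
  intro t _
  obtain ⟨e1, e2⟩ := hcomp t
  have hs := hspeed t
  have hg0 : g t = v ^ 2 := by
    have hnn : 0 ≤ g t := by positivity
    have : Real.sqrt (g t) = v := hs
    nlinarith [Real.sq_sqrt hnn]
  have hdot : dot2 (deriv (deriv x) t) (J2 (deriv x t)) = (L * K / m) * v ^ 2 := by
    unfold dot2 J2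
    simp only [e1, e2]
    have : (deriv x t).1 ^ 2 + (deriv x t).2 ^ 2 = v ^ 2 := hg0
    linear_combination (L * K / m) * this
  rw [hdot, hs]
  field_simp
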